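/- Let ξ be a real random variable with P(|ξ| > u) ≤ u^{-β} (ln u)^γ for u ≥ e, where β > 2 and γ > -1. Then there exists a constant C = C(β, γ) such that for all p ∈ [2, β), E|ξ|^p ≤ C · (β - p)^{-γ-1}. -/

import Mathlib

open MeasureTheory Real Set

lemma aux_gamma {a γ : ℝ} (ha : 0 < a) (hγ : -1 < γ) :
    IntegrableOn (fun s : ℝ => Real.exp (-(a * s)) * s ^ γ) (Set.Ioi 1) ∧
      ∫ s in Set.Ioi (1:ℝ), Real.exp (-(a * s)) * s ^ γ ≤
        Real.Gamma (γ + 1) * a ^ (-γ - 1) := by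
  have key : (fun s : ℝ => Real.exp (-(a * s)) * s ^ γ)
      = fun s : ℝ => s ^ γ * Real.exp (-a * s ^ (1:ℝ)) := by
    funext s
    rw [Real.rpow_one, neg_mul, mul_comm]
  have hint0 : IntegrableOn (fun s : ℝ => Real.exp (-(a * s)) * s ^ γ) (Set.Ioi 0) := by
    rw [key]
    exact integrableOn_rpow_mul_exp_neg_mul_rpow hγ one_pos ha
  have hint : IntegrableOn (fun s : ℝ => Real.exp (-(a * s)) * s ^ γ) (Set.Ioi 1) :=
    hint0.mono_set (Set.Ioi_subset_Ioi zero_le_one)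
  refine ⟨hint, ?_⟩
  have hmono : ∫ s in Set.Ioi (1:ℝ), Real.exp (-(a * s)) * s ^ γ
      ≤ ∫ s in Set.Ioi (0:ℝ), Real.exp (-(a * s)) * s ^ γ := by
    apply setIntegral_mono_set hint0
    · filter_upwards [ae_restrict_mem measurableSet_Ioi] with s hs
      have hs0 : (0:ℝ) < s := hs
      positivity
    · exact HasSubset.Subset.eventuallyLE (Set.Ioi_subset_Ioi zero_le_one)
  have hval : ∫ s in Set.Ioi (0:ℝ), Real.exp (-(a * s)) * s ^ γ
      = Real.Gamma (γ + 1) * a ^ (-γ - 1) := by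
    have h2 := Real.integral_rpow_mul_exp_neg_mul_Ioi (by linarith : (0:ℝ) < γ + 1) ha
    simp only [add_sub_cancel_right] at h2
    rw [show (∫ s in Set.Ioi (0:ℝ), Real.exp (-(a * s)) * s ^ γ)
        = ∫ s in Set.Ioi (0:ℝ), s ^ γ * Real.exp (-(a * s)) from by
      congr 1; funext s; rw [mul_comm], h2]
    rw [one_div, ← Real.rpow_neg_one a, ← Real.rpow_mul ha.le, mul_comm]
    congr 1
    ring
  linarith [hmono, hval.le, hval.ge]

lemma aux_tail {a γ : ℝ} (ha : 0 < a) (hγ : -1 < γ) :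
    IntegrableOn (fun t : ℝ => t ^ (-a - 1) * Real.log t ^ γ) (Set.Ioi (Real.exp 1)) ∧
      ∫ t in Set.Ioi (Real.exp 1), t ^ (-a - 1) * Real.log t ^ γ ≤
        Real.Gamma (γ + 1) * a ^ (-γ - 1) := by
  obtain ⟨hint, hle⟩ := aux_gamma ha hγ
  set g : ℝ → ℝ := fun t => t ^ (-a - 1) * Real.log t ^ γ with hg
  have himg : Set.Ioi (Real.exp 1) = Real.exp '' Set.Ioi 1 := by
    ext x
    constructor
    · intro hx
      have hx0 : (0:ℝ) < x := lt_trans (Real.exp_pos 1) hx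
      exact ⟨Real.log x, (Real.lt_log_iff_exp_lt hx0).2 hx, Real.exp_log hx0⟩
    · rintro ⟨s, hs, rfl⟩
      exact Real.exp_lt_exp.2 hs
  have hderiv : ∀ x ∈ Set.Ioi (1:ℝ),
      HasDerivWithinAt Real.exp (Real.exp x) (Set.Ioi 1) x :=
    fun x _ => (Real.hasDerivAt_exp x).hasDerivWithinAt
  have hinj : Set.InjOn Real.exp (Set.Ioi 1) := Real.exp_injective.injOn
  have hptwise : ∀ s ∈ Set.Ioi (1:ℝ),
      |Real.exp s| • g (Real.exp s) = Real.exp (-(a * s)) * s ^ γ := by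
    intro s _
    have h1 : (Real.exp s) ^ (-a - 1) = Real.exp (s * (-a - 1)) := by
      rw [Real.rpow_def_of_pos (Real.exp_pos s), Real.log_exp]
    rw [smul_eq_mul, hg]
    simp only [Real.log_exp, h1, abs_of_pos (Real.exp_pos s)]
    rw [← mul_assoc, ← Real.exp_add]
    congr 2
    ring
  have hiff := integrableOn_image_iff_integrableOn_abs_deriv_smul measurableSet_Ioi
      hderiv hinj g
  have heq := MeasureTheory.integral_image_eq_integral_abs_deriv_smul measurableSet_Ioi
      hderiv hinj g
  constructor
  · rw [himg, hiff]
    exact hint.congr_fun (fun s hs => (hptwise s hs).symm) measurableSet_Ioi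
  · rw [himg, heq, setIntegral_congr_fun measurableSet_Ioi hptwise]
    exact hle

theorem stmt_4 {Ω : Type*} [MeasurableSpace Ω] (μ : Measure Ω) [IsProbabilityMeasure μ]
    (ξ : Ω → ℝ) (hξ : Measurable ξ) (β γ : ℝ) (hβ : 2 < β) (hγ : -1 < γ)
    (htail : ∀ u : ℝ, Real.exp 1 ≤ u →
      (μ {ω | u < |ξ ω|}).toReal ≤ u ^ (-β) * Real.log u ^ γ) :
    ∃ C > (0 : ℝ), ∀ p : ℝ, 2 ≤ p → p < β →
      ∫⁻ ω, ENNReal.ofReal (|ξ ω| ^ p) ∂μ ≤ ENNReal.ofReal (C * (β - p) ^ (-γ - 1)) := by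
  have hγ1 : 0 < γ + 1 := by linarith
  have hΓ : 0 < Real.Gamma (γ + 1) := Real.Gamma_pos_of_pos hγ1
  have hβ0 : 0 < β := by linarith
  have hβ2 : 0 < β - 2 := by linarith
  refine ⟨β * Real.exp β * (β - 2) ^ (γ + 1) + β * Real.Gamma (γ + 1), by positivity, ?_⟩
  intro p hp2 hpβ
  have hp0 : 0 < p := by linarith
  have ha : 0 < β - p := by linarith
  -- layer cake
  have f_nn : 0 ≤ᵐ[μ] fun ω => |ξ ω| := Filter.Eventually.of_forall fun ω => abs_nonneg _
  have f_mble : AEMeasurable (fun ω => |ξ ω|) μ := hξ.abs.aemeasurable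
  have g_intble : ∀ t > (0:ℝ), IntervalIntegrable (fun t : ℝ => p * t ^ (p - 1)) volume 0 t :=
    fun t _ => (intervalIntegral.intervalIntegrable_rpow' (by linarith)).const_mul p
  have g_nn : ∀ᵐ t ∂(volume.restrict (Set.Ioi (0:ℝ))), 0 ≤ p * t ^ (p - 1) := by
    filter_upwards [ae_restrict_mem measurableSet_Ioi] with t ht
    have ht0 : (0:ℝ) < t := ht
    positivity
  have layer := lintegral_comp_eq_lintegral_meas_lt_mul μ f_nn f_mble g_intble g_nn
  have lhs_eq : ∀ ω, ENNReal.ofReal (∫ t in (0:ℝ)..|ξ ω|, p * t ^ (p - 1))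
      = ENNReal.ofReal (|ξ ω| ^ p) := by
    intro ω
    congr 1
    rw [intervalIntegral.integral_const_mul,
      integral_rpow (Or.inl (by linarith : (-1:ℝ) < p - 1)),
      sub_add_cancel, Real.zero_rpow (by positivity), sub_zero]
    field_simp
  have key : (∫⁻ ω, ENNReal.ofReal (|ξ ω| ^ p) ∂μ)
      = ∫⁻ t in Set.Ioi (0:ℝ), μ {ω | t < |ξ ω|} * ENNReal.ofReal (p * t ^ (p - 1)) := by
    rw [← layer]
    exact lintegral_congr fun ω => (lhs_eq ω).symm
  rw [key, ← Set.Ioc_union_Ioi_eq_Ioi (Real.exp_pos 1).le,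
    lintegral_union measurableSet_Ioi Set.Ioc_disjoint_Ioi_same]
  -- Part A
  have hA : (∫⁻ t in Set.Ioc (0:ℝ) (Real.exp 1),
        μ {ω | t < |ξ ω|} * ENNReal.ofReal (p * t ^ (p - 1)))
      ≤ ENNReal.ofReal (p * Real.exp p) := by
    have hb : ∀ t ∈ Set.Ioc (0:ℝ) (Real.exp 1),
        μ {ω | t < |ξ ω|} * ENNReal.ofReal (p * t ^ (p - 1))
          ≤ ENNReal.ofReal (p * Real.exp 1 ^ (p - 1)) := by
      intro t ht
      calc μ {ω | t < |ξ ω|} * ENNReal.ofReal (p * t ^ (p - 1))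
          ≤ 1 * ENNReal.ofReal (p * Real.exp 1 ^ (p - 1)) := by
            refine mul_le_mul' prob_le_one (ENNReal.ofReal_le_ofReal ?_)
            have := Real.rpow_le_rpow ht.1.le ht.2 (by linarith : (0:ℝ) ≤ p - 1)
            nlinarith
        _ = ENNReal.ofReal (p * Real.exp 1 ^ (p - 1)) := one_mul _
    calc (∫⁻ t in Set.Ioc (0:ℝ) (Real.exp 1),
          μ {ω | t < |ξ ω|} * ENNReal.ofReal (p * t ^ (p - 1)))
        ≤ ∫⁻ _ in Set.Ioc (0:ℝ) (Real.exp 1),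
            ENNReal.ofReal (p * Real.exp 1 ^ (p - 1)) :=
          setLIntegral_mono' measurableSet_Ioc hb
      _ = ENNReal.ofReal (p * Real.exp 1 ^ (p - 1)) * volume (Set.Ioc (0:ℝ) (Real.exp 1)) :=
          setLIntegral_const _ _
      _ = ENNReal.ofReal (p * Real.exp p) := by
          rw [Real.volume_Ioc, sub_zero, ← ENNReal.ofReal_mul (by positivity)]
          congr 1
          rw [Real.exp_one_rpow, mul_assoc, ← Real.exp_add]
          congr 2
          ring
  -- Part B
  obtain ⟨hint, hle⟩ := aux_tail ha hγ
  have hB : (∫⁻ t in Set.Ioi (Real.exp 1),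
        μ {ω | t < |ξ ω|} * ENNReal.ofReal (p * t ^ (p - 1)))
      ≤ ENNReal.ofReal (p * (Real.Gamma (γ + 1) * (β - p) ^ (-γ - 1))) := by
    have step1 : ∀ t ∈ Set.Ioi (Real.exp 1),
        μ {ω | t < |ξ ω|} * ENNReal.ofReal (p * t ^ (p - 1))
          ≤ ENNReal.ofReal (p * (t ^ (-(β - p) - 1) * Real.log t ^ γ)) := by
      intro t ht
      have ht' : Real.exp 1 ≤ t := le_of_lt ht
      have ht0 : (0:ℝ) < t := lt_trans (Real.exp_pos 1) ht
      have hlog : (1:ℝ) ≤ Real.log t := by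
        rw [Real.le_log_iff_exp_le ht0]; exact ht'
      have hμ : μ {ω | t < |ξ ω|} ≤ ENNReal.ofReal (t ^ (-β) * Real.log t ^ γ) := by
        rw [← ENNReal.ofReal_toReal (measure_ne_top μ _)]
        exact ENNReal.ofReal_le_ofReal (htail t ht')
      calc μ {ω | t < |ξ ω|} * ENNReal.ofReal (p * t ^ (p - 1))
          ≤ ENNReal.ofReal (t ^ (-β) * Real.log t ^ γ) * ENNReal.ofReal (p * t ^ (p - 1)) :=
            mul_le_mul_left hμ _
        _ = ENNReal.ofReal (t ^ (-β) * Real.log t ^ γ * (p * t ^ (p - 1))) :=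
            (ENNReal.ofReal_mul (by positivity)).symm
        _ = ENNReal.ofReal (p * (t ^ (-(β - p) - 1) * Real.log t ^ γ)) := by
            congr 1
            have hrw : t ^ (-β) * t ^ (p - 1) = t ^ (-(β - p) - 1) := by
              rw [← Real.rpow_add ht0]
              congr 1
              ring
            calc t ^ (-β) * Real.log t ^ γ * (p * t ^ (p - 1))
                = p * (t ^ (-β) * t ^ (p - 1) * Real.log t ^ γ) := by ring
              _ = p * (t ^ (-(β - p) - 1) * Real.log t ^ γ) := by rw [hrw]
    have hnn : 0 ≤ᵐ[volume.restrict (Set.Ioi (Real.exp 1))]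
        fun t : ℝ => p * (t ^ (-(β - p) - 1) * Real.log t ^ γ) := by
      filter_upwards [ae_restrict_mem measurableSet_Ioi] with t ht
      have ht0 : (0:ℝ) < t := lt_trans (Real.exp_pos 1) ht
      have h1e : (1:ℝ) < Real.exp 1 := by
        have h := Real.exp_lt_exp.2 (one_pos : (0:ℝ) < 1)
        rwa [Real.exp_zero] at h
      have hlog : (0:ℝ) < Real.log t := Real.log_pos (lt_trans h1e ht)
      positivity
    calc (∫⁻ t in Set.Ioi (Real.exp 1),
          μ {ω | t < |ξ ω|} * ENNReal.ofReal (p * t ^ (p - 1)))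
        ≤ ∫⁻ t in Set.Ioi (Real.exp 1),
            ENNReal.ofReal (p * (t ^ (-(β - p) - 1) * Real.log t ^ γ)) :=
          setLIntegral_mono' measurableSet_Ioi step1
      _ = ENNReal.ofReal (∫ t in Set.Ioi (Real.exp 1),
            p * (t ^ (-(β - p) - 1) * Real.log t ^ γ)) :=
          (MeasureTheory.ofReal_integral_eq_lintegral_ofReal (hint.const_mul p) hnn).symm
      _ ≤ ENNReal.ofReal (p * (Real.Gamma (γ + 1) * (β - p) ^ (-γ - 1))) := by
          apply ENNReal.ofReal_le_ofReal
          rw [MeasureTheory.integral_const_mul]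
          exact mul_le_mul_of_nonneg_left hle hp0.le
  refine le_trans (add_le_add hA hB) ?_
  rw [← ENNReal.ofReal_add (by positivity) (by positivity)]
  apply ENNReal.ofReal_le_ofReal
  -- final real inequality
  have hone : 1 ≤ (β - 2) ^ (γ + 1) * (β - p) ^ (-γ - 1) := by
    have hax : (β - p) ^ (γ + 1) ≤ (β - 2) ^ (γ + 1) :=
      Real.rpow_le_rpow ha.le (by linarith) hγ1.le
    have hainv : (β - p) ^ (-γ - 1) = ((β - p) ^ (γ + 1))⁻¹ := by
      rw [show -γ - 1 = -(γ + 1) by ring, Real.rpow_neg ha.le]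
    have hpos : (0:ℝ) < (β - p) ^ (γ + 1) := Real.rpow_pos_of_pos ha _
    rw [hainv, ← div_eq_mul_inv, le_div_iff₀ hpos]
    simpa using hax
  have h1 : p * Real.exp p ≤ β * Real.exp β * ((β - 2) ^ (γ + 1) * (β - p) ^ (-γ - 1)) := by
    have : p * Real.exp p ≤ β * Real.exp β := by
      have := Real.exp_le_exp.2 hpβ.le
      nlinarith [Real.exp_pos p]
    calc p * Real.exp p ≤ β * Real.exp β := this
      _ ≤ β * Real.exp β * ((β - 2) ^ (γ + 1) * (β - p) ^ (-γ - 1)) :=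
        le_mul_of_one_le_right (by positivity) hone
  have h2 : p * (Real.Gamma (γ + 1) * (β - p) ^ (-γ - 1))
      ≤ β * Real.Gamma (γ + 1) * (β - p) ^ (-γ - 1) := by
    have hxp : (0:ℝ) < (β - p) ^ (-γ - 1) := Real.rpow_pos_of_pos ha _
    have h := mul_le_mul_of_nonneg_right
      (mul_le_mul_of_nonneg_right hpβ.le hΓ.le) hxp.le
    linarith [h, mul_assoc p (Real.Gamma (γ + 1)) ((β - p) ^ (-γ - 1))]
  calc p * Real.exp p + p * (Real.Gamma (γ + 1) * (β - p) ^ (-γ - 1))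
      ≤ β * Real.exp β * ((β - 2) ^ (γ + 1) * (β - p) ^ (-γ - 1))
        + β * Real.Gamma (γ + 1) * (β - p) ^ (-γ - 1) := add_le_add h1 h2
    _ = (β * Real.exp β * (β - 2) ^ (γ + 1) + β * Real.Gamma (γ + 1)) * (β - p) ^ (-γ - 1) := by
        ring
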